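/- Let α ≥ 1 and let (w_j) be a sequence of positive reals with w_1 = N and w_{j+1} ≥ w_j / (α(k_j + 1)) for positive integers k_j, for j = 1, ..., s. If w_{s+1} ≤ 1, then Σ_{j=1}^s k_j ≥ (log N)/(1 + log α). -/

import Mathlib

noncomputable section

/-- Closed axis-parallel `d`-cube with lower corner `a` and side length `w`. -/
def Cube {d : ℕ} (a : Fin d → ℝ) (w : ℝ) : Set (Fin d → ℝ) :=
  {x | ∀ i, a i ≤ x i ∧ x i ≤ a i + w}

/-- Open axis-parallel `d`-cube with lower corner `a` and side length `w`. -/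
def OpenCube {d : ℕ} (a : Fin d → ℝ) (w : ℝ) : Set (Fin d → ℝ) :=
  {x | ∀ i, a i < x i ∧ x i < a i + w}

/-- The open box `(0,N)^d`. -/
def Box (d N : ℕ) : Set (Fin d → ℝ) :=
  {x | ∀ i, 0 < x i ∧ x i < N}

/-- The level of an integer point: minimum 2-adic valuation of its coordinates. -/
def level {d : ℕ} (q : Fin d → ℤ) : ℕ := ⨅ i, padicValInt 2 (q i)

/-- Embedding of integer points into `ℝ^d`. -/
def toRealPt {d : ℕ} (q : Fin d → ℤ) : Fin d → ℝ := fun i => (q i : ℝ)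

/-- `w` is the out-width of `O`: side of the smallest enclosing axis-parallel cube. -/
def IsOutWidth {d : ℕ} (O : Set (Fin d → ℝ)) (w : ℝ) : Prop :=
  (∃ a, O ⊆ Cube a w) ∧ ∀ w' a, O ⊆ Cube a w' → w ≤ w'

/-- `w` is the in-width of `O`: side of the largest inscribed axis-parallel cube. -/
def IsInWidth {d : ℕ} (O : Set (Fin d → ℝ)) (w : ℝ) : Prop :=
  (∃ a, Cube a w ⊆ O) ∧ ∀ w' a, Cube a w' ⊆ O → w' ≤ w

/-- `O` is `α`-fat: out-width at most `α` times in-width. -/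
def IsFat {d : ℕ} (α : ℝ) (O : Set (Fin d → ℝ)) : Prop :=
  ∃ wo wi, IsOutWidth O wo ∧ IsInWidth O wi ∧ wo ≤ α * wi

/-- Level of an object: maximum level of integer points inside it. -/
def objLevel {d : ℕ} (O : Set (Fin d → ℝ)) : ℕ :=
  sSup {l | ∃ q : Fin d → ℤ, toRealPt q ∈ O ∧ level q = l}

/-- Integer points of level exactly `l` inside `O`. -/
def lvlPts {d : ℕ} (l : ℕ) (O : Set (Fin d → ℝ)) : Set (Fin d → ℤ) :=
  {q | toRealPt q ∈ O ∧ level q = l}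

/-- `H` hits `O`. -/
def hits {d : ℕ} (H : Set (Fin d → ℤ)) (O : Set (Fin d → ℝ)) : Prop :=
  ∃ q ∈ H, toRealPt q ∈ O

/-- The hitting set maintained by the level-picking algorithm after `n` rounds. -/
def algoH {d : ℕ} (O : ℕ → Set (Fin d → ℝ)) : ℕ → Set (Fin d → ℤ)
  | 0 => ∅
  | n + 1 =>
      algoH O n ∪
        {q | ¬ hits (algoH O n) (O n) ∧ q ∈ lvlPts (objLevel (O n)) (O n)}
/-- arithmetic core of the lower bound: from `w 1 = N`,
`w (j+1) ≥ w j / (α (k j + 1))` and `w (s+1) ≤ 1` we get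
`Σ k_j ≥ log N / (1 + log α)`. -/
theorem lower_bound_arith (s : ℕ) (α N : ℝ) (hα : 1 ≤ α) (hN : 0 < N)
    (w : ℕ → ℝ) (k : ℕ → ℕ) (hk : ∀ j, 1 ≤ k j)
    (hpos : ∀ j, 0 < w j) (hw1 : w 1 = N)
    (hrec : ∀ j, 1 ≤ j → j ≤ s → w j / (α * (k j + 1)) ≤ w (j + 1))
    (hend : w (s + 1) ≤ 1) :
    Real.log N / (1 + Real.log α) ≤ ∑ j ∈ Finset.Icc 1 s, (k j : ℝ) := by
  have hα0 : (0:ℝ) < α := lt_of_lt_of_le one_pos hα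
  have hlogα : 0 ≤ Real.log α := Real.log_nonneg hα
  have hfac : ∀ j, (0:ℝ) < α * (k j + 1) := fun j => by positivity
  have key : ∀ t, t ≤ s → w 1 ≤ w (t+1) * ∏ j ∈ Finset.Icc 1 t, (α * (k j + 1)) := by
    intro t
    induction t with
    | zero => intro _; simp
    | succ n ih =>
      intro hns
      have h1 := ih (Nat.le_of_succ_le hns)
      have h2 := hrec (n+1) (Nat.le_add_left 1 n) hns
      have h3 : w (n+1) ≤ w (n+1+1) * (α * (k (n+1) + 1)) := by
        rw [div_le_iff₀ (hfac (n+1))] at h2; linarith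
      calc w 1 ≤ w (n+1) * ∏ j ∈ Finset.Icc 1 n, (α * (k j + 1)) := h1
        _ ≤ (w (n+1+1) * (α * (k (n+1) + 1))) * ∏ j ∈ Finset.Icc 1 n, (α * (k j + 1)) :=
            mul_le_mul_of_nonneg_right h3 (Finset.prod_nonneg fun j _ => (hfac j).le)
        _ = w (n+1+1) * ∏ j ∈ Finset.Icc 1 (n+1), (α * (k j + 1)) := by
            rw [Finset.prod_Icc_succ_top (Nat.le_add_left 1 n)]; ring
  have hN1 : N ≤ ∏ j ∈ Finset.Icc 1 s, (α * (k j + 1)) := by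
    have h := key s le_rfl
    rw [hw1] at h
    calc N ≤ w (s+1) * ∏ j ∈ Finset.Icc 1 s, (α * (k j + 1)) := h
      _ ≤ 1 * ∏ j ∈ Finset.Icc 1 s, (α * (k j + 1)) :=
          mul_le_mul_of_nonneg_right hend (Finset.prod_nonneg fun j _ => (hfac j).le)
      _ = _ := one_mul _
  have hlog : Real.log N ≤ ∑ j ∈ Finset.Icc 1 s, Real.log (α * (k j + 1)) := by
    rw [← Real.log_prod (fun j _ => (hfac j).ne')]
    exact Real.log_le_log hN hN1
  have hterm : ∀ j ∈ Finset.Icc 1 s,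
      Real.log (α * (k j + 1)) ≤ (1 + Real.log α) * (k j : ℝ) := by
    intro j _
    rw [Real.log_mul hα0.ne' (by positivity)]
    have h1 : Real.log ((k j : ℝ) + 1) ≤ (k j : ℝ) := by
      rw [Real.log_le_iff_le_exp (by positivity)]
      exact Real.add_one_le_exp _
    have h2 : Real.log α ≤ (k j : ℝ) * Real.log α := by
      have hk1 : (1:ℝ) ≤ (k j : ℝ) := by exact_mod_cast hk j
      nlinarith
    nlinarith
  have hsum : Real.log N ≤ (1 + Real.log α) * ∑ j ∈ Finset.Icc 1 s, (k j : ℝ) := by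
    rw [Finset.mul_sum]
    exact le_trans hlog (Finset.sum_le_sum hterm)
  have hpos1 : 0 < 1 + Real.log α := by linarith
  rw [div_le_iff₀ hpos1]
  linarith [hsum]
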